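/- Let A be a real m×m matrix with ⟨Ay, y⟩ ≥ λ_A ‖y‖² for all y ∈ ℝ^m (λ_A > 0), let g̃ : ℝ^n × ℝ^m → ℝ^m be Lipschitz continuous with constant L satisfying λ_A > L, let ε > 0, let ω : ℝ → ℝ^m be continuous, and let X : [a,b] → ℝ^n be continuous. Suppose Y, Ŷ : [a,b] → ℝ^m are continuous and satisfy, for all t ∈ [a,b], Y(t) = Y(a) + (1/ε) ∫_a^t (−A Y(v) + g̃(X(v), Y(v))) dv + ω(t/ε) − ω(a/ε) and Ŷ(t) = Ŷ(a) + (1/ε) ∫_a^t (−A Ŷ(v) + g̃(X(a), Ŷ(v))) dv + ω(t/ε) − ω(a/ε). Then for all r ∈ [a,b], ‖Y(r) − Ŷ(r)‖ ≤ e^{−(λ_A − L)(r − a)/ε} ‖Y(a) − Ŷ(a)‖ + (L/ε) ∫_a^r e^{−(λ_A − L)(r − v)/ε} ‖X(v) − X(a)‖ dv. -/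

import Mathlib

open scoped RealInnerProductSpace
open MeasureTheory

set_option maxHeartbeats 1000000

theorem auxiliary_process_estimate {n m : ℕ} (A : Matrix (Fin m) (Fin m) ℝ) (lamA L : ℝ)
    (hlam : 0 < lamA) (hLlam : L < lamA)
    (hA : ∀ y : EuclideanSpace ℝ (Fin m), lamA * ‖y‖ ^ 2 ≤ ⟪Matrix.toEuclideanLin A y, y⟫)
    (g : EuclideanSpace ℝ (Fin n) → EuclideanSpace ℝ (Fin m) → EuclideanSpace ℝ (Fin m))
    (hg : ∀ x₁ x₂ y₁ y₂, ‖g x₁ y₁ - g x₂ y₂‖ ≤ L * (‖x₁ - x₂‖ + ‖y₁ - y₂‖))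
    (ε : ℝ) (hε : 0 < ε)
    (ω : ℝ → EuclideanSpace ℝ (Fin m)) (hω : Continuous ω)
    (a b : ℝ) (hab : a ≤ b)
    (X : ℝ → EuclideanSpace ℝ (Fin n)) (hXc : ContinuousOn X (Set.Icc a b))
    (Y Yh : ℝ → EuclideanSpace ℝ (Fin m))
    (hYc : ContinuousOn Y (Set.Icc a b)) (hYhc : ContinuousOn Yh (Set.Icc a b))
    (hY : ∀ t ∈ Set.Icc a b, Y t = Y a
      + ε⁻¹ • (∫ v in a..t, (-(Matrix.toEuclideanLin A (Y v)) + g (X v) (Y v)))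
      + (ω (t / ε) - ω (a / ε)))
    (hYh : ∀ t ∈ Set.Icc a b, Yh t = Yh a
      + ε⁻¹ • (∫ v in a..t, (-(Matrix.toEuclideanLin A (Yh v)) + g (X a) (Yh v)))
      + (ω (t / ε) - ω (a / ε))) :
    ∀ r ∈ Set.Icc a b,
      ‖Y r - Yh r‖ ≤ Real.exp (-(lamA - L) * (r - a) / ε) * ‖Y a - Yh a‖
        + (L / ε) * ∫ v in a..r, Real.exp (-(lamA - L) * (r - v) / ε) * ‖X v - X a‖ := by
  -- trivial case: both spaces are trivial
  by_cases hnm : n = 0 ∧ m = 0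
  · obtain ⟨hn, hm⟩ := hnm
    subst hn; subst hm
    haveI hs : Subsingleton (EuclideanSpace ℝ (Fin 0)) := ⟨fun x y => PiLp.ext fun i => i.elim0⟩
    intro r hr
    have h1 : ∀ x y : EuclideanSpace ℝ (Fin 0), x - y = 0 := fun x y => by
      rw [Subsingleton.elim x y, sub_self]
    simp [h1]
  -- L is nonnegative
  have hL0 : 0 ≤ L := by
    rcases Decidable.not_and_iff_or_not.mp hnm with hn | hm
    · have h := hg (EuclideanSpace.single ⟨0, Nat.pos_of_ne_zero hn⟩ (1:ℝ)) 0 0 0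
      have h2 : ‖EuclideanSpace.single (⟨0, Nat.pos_of_ne_zero hn⟩ : Fin n) (1:ℝ) - 0‖ = 1 := by
        rw [sub_zero, EuclideanSpace.norm_single, norm_one]
      rw [h2] at h
      have h3 := norm_nonneg (g (EuclideanSpace.single (⟨0, Nat.pos_of_ne_zero hn⟩ : Fin n) (1:ℝ)) 0 - g 0 0)
      simp only [sub_self, norm_zero] at h
      linarith
    · have h := hg 0 0 (EuclideanSpace.single ⟨0, Nat.pos_of_ne_zero hm⟩ (1:ℝ)) 0
      have h2 : ‖EuclideanSpace.single (⟨0, Nat.pos_of_ne_zero hm⟩ : Fin m) (1:ℝ) - 0‖ = 1 := by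
        rw [sub_zero, EuclideanSpace.norm_single, norm_one]
      rw [h2] at h
      have h3 := norm_nonneg (g 0 (EuclideanSpace.single (⟨0, Nat.pos_of_ne_zero hm⟩ : Fin m) (1:ℝ)) - g 0 0)
      simp only [sub_self, norm_zero] at h
      linarith
  set c : ℝ := (lamA - L) / ε with hc
  have hcpos : 0 < c := div_pos (by linarith) hε
  -- clamp
  set cl : ℝ → ℝ := fun t => min b (max a t) with hcl
  have hcl_mem : ∀ t, cl t ∈ Set.Icc a b := fun t =>
    ⟨le_min hab (le_max_left a t), min_le_left _ _⟩
  have hcl_eq : ∀ t ∈ Set.Icc a b, cl t = t := fun t ht => by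
    simp only [hcl]; rw [max_eq_right ht.1, min_eq_right ht.2]
  have hcla : cl a = a := hcl_eq a ⟨le_refl a, hab⟩
  have hcl_cont : Continuous cl := continuous_const.min (continuous_const.max continuous_id)
  set Xc : ℝ → EuclideanSpace ℝ (Fin n) := X ∘ cl with hXcdef
  set Yc : ℝ → EuclideanSpace ℝ (Fin m) := Y ∘ cl with hYcdef
  set Yhc : ℝ → EuclideanSpace ℝ (Fin m) := Yh ∘ cl with hYhcdef
  have hXcc : Continuous Xc := hXc.comp_continuous hcl_cont hcl_mem
  have hYcc : Continuous Yc := hYc.comp_continuous hcl_cont hcl_mem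
  have hYhcc : Continuous Yhc := hYhc.comp_continuous hcl_cont hcl_mem
  have hAc : Continuous fun y : EuclideanSpace ℝ (Fin m) => Matrix.toEuclideanLin A y :=
    (Matrix.toEuclideanLin A).continuous_of_finiteDimensional
  have hgc : Continuous fun p : (EuclideanSpace ℝ (Fin n)) × (EuclideanSpace ℝ (Fin m)) => g p.1 p.2 := by
    apply LipschitzWith.continuous (K := (2*L).toNNReal)
    apply LipschitzWith.of_dist_le_mul
    intro p q
    have h1 := hg p.1 q.1 p.2 q.2
    have h2 : dist p.1 q.1 ≤ dist p q := by rw [Prod.dist_eq]; exact le_max_left _ _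
    have h3 : dist p.2 q.2 ≤ dist p q := by rw [Prod.dist_eq]; exact le_max_right _ _
    have hco : ((2*L).toNNReal : ℝ) = 2*L := Real.coe_toNNReal _ (by positivity)
    rw [hco]
    rw [dist_eq_norm] at h2 h3 ⊢
    nlinarith [dist_nonneg (x := p) (y := q)]
  -- the difference vector field
  set G1 : ℝ → EuclideanSpace ℝ (Fin m) :=
    fun v => -(Matrix.toEuclideanLin A (Yc v)) + g (Xc v) (Yc v) with hG1
  set G2 : ℝ → EuclideanSpace ℝ (Fin m) :=
    fun v => -(Matrix.toEuclideanLin A (Yhc v)) + g (Xc a) (Yhc v) with hG2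
  set Gf : ℝ → EuclideanSpace ℝ (Fin m) := fun v => G1 v - G2 v with hGf
  have hG1c : Continuous G1 := (hAc.comp hYcc).neg.add (hgc.comp (hXcc.prodMk hYcc))
  have hG2c : Continuous G2 :=
    (hAc.comp hYhcc).neg.add (hgc.comp (continuous_const.prodMk hYhcc))
  have hGfc : Continuous Gf := hG1c.sub hG2c
  -- Z satisfies an integral equation with continuous integrand
  have hsub : ∀ t ∈ Set.Icc a b, Set.uIcc a t ⊆ Set.Icc a b := fun t ht => by
    rw [Set.uIcc_of_le ht.1]
    exact Set.Icc_subset_Icc le_rfl ht.2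
  have hEq1 : ∀ t ∈ Set.Icc a b,
      (∫ v in a..t, (-(Matrix.toEuclideanLin A (Y v)) + g (X v) (Y v)))
        = ∫ v in a..t, G1 v := fun t ht => by
    apply intervalIntegral.integral_congr
    intro v hv
    have hv' := hcl_eq v (hsub t ht hv)
    simp only [hG1, hXcdef, hYcdef, Function.comp_apply, hv']
  have hEq2 : ∀ t ∈ Set.Icc a b,
      (∫ v in a..t, (-(Matrix.toEuclideanLin A (Yh v)) + g (X a) (Yh v)))
        = ∫ v in a..t, G2 v := fun t ht => by
    apply intervalIntegral.integral_congr
    intro v hv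
    have hv' := hcl_eq v (hsub t ht hv)
    simp only [hG2, hXcdef, hYhcdef, Function.comp_apply, hv', hcla]
  set ZF : ℝ → EuclideanSpace ℝ (Fin m) :=
    fun t => (Y a - Yh a) + ε⁻¹ • ∫ v in a..t, Gf v with hZF
  have hZeq : ∀ t ∈ Set.Icc a b, Y t - Yh t = ZF t := by
    intro t ht
    rw [hY t ht, hYh t ht, hEq1 t ht, hEq2 t ht]
    have e3 : (∫ v in a..t, Gf v)
        = (∫ v in a..t, G1 v) - ∫ v in a..t, G2 v := by
      simp only [hGf]
      exact intervalIntegral.integral_sub (hG1c.intervalIntegrable _ _)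
        (hG2c.intervalIntegrable _ _)
    simp only [hZF, e3, smul_sub]
    abel
  have hZFd : ∀ t, HasDerivAt ZF (ε⁻¹ • Gf t) t := fun t => by
    have h1 := (hGfc.integral_hasStrictDerivAt a t).hasDerivAt
    exact (h1.const_smul ε⁻¹).const_add _
  -- exponential multiplier
  set u : ℝ → EuclideanSpace ℝ (Fin m) := fun t => Real.exp (c * (t - a)) • ZF t with hu
  set u' : ℝ → EuclideanSpace ℝ (Fin m) :=
    fun t => Real.exp (c * (t - a)) • (ε⁻¹ • Gf t) + (c * Real.exp (c * (t - a))) • ZF t with hu'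
  have hud : ∀ t, HasDerivAt u (u' t) t := fun t => by
    have hexp : HasDerivAt (fun t => Real.exp (c * (t - a))) (c * Real.exp (c * (t - a))) t := by
      have h1 : HasDerivAt (fun t : ℝ => c * (t - a)) c t := by
        simpa using ((hasDerivAt_id t).sub_const a).const_mul c
      simpa [mul_comm] using h1.exp
    exact hexp.smul (hZFd t)
  have huc : Continuous u := by
    have : Differentiable ℝ u := fun t => (hud t).differentiableAt
    exact this.continuous
  set φ : ℝ → ℝ := fun t => ⟪u t, u t⟫ with hφdef
  have hφd : ∀ t, HasDerivAt φ (2 * ⟪u' t, u t⟫) t := fun t => by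
    have h1 := (hud t).inner ℝ (hud t)
    have h2 : ⟪u t, u' t⟫ + ⟪u' t, u t⟫ = 2 * ⟪u' t, u t⟫ := by
      rw [real_inner_comm]; ring
    exact h2 ▸ h1
  -- the forcing term
  set h : ℝ → ℝ := fun t => (L / ε) * Real.exp (c * (t - a)) * ‖Xc t - Xc a‖ with hh
  have hhc : Continuous h := by
    apply Continuous.mul
    · exact continuous_const.mul (Real.continuous_exp.comp
        (continuous_const.mul (continuous_id.sub continuous_const)))
    · exact (hXcc.sub continuous_const).norm
  have hh0 : ∀ t, 0 ≤ h t := fun t =>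
    mul_nonneg (mul_nonneg (div_nonneg hL0 hε.le) (Real.exp_pos _).le) (norm_nonneg _)
  set H : ℝ → ℝ := fun t => ∫ v in a..t, h v with hH
  have hHd : ∀ t, HasDerivAt H (h t) t := fun t =>
    (hhc.integral_hasStrictDerivAt a t).hasDerivAt
  have hHc : Continuous H := by
    have : Differentiable ℝ H := fun t => (hHd t).differentiableAt
    exact this.continuous
  -- key differential inequality
  have hkey : ∀ t ∈ Set.Icc a b, ⟪u' t, u t⟫ ≤ h t * ‖u t‖ := by
    intro t ht
    have hclt := hcl_eq t ht
    have hepos : 0 < Real.exp (c * (t - a)) := Real.exp_pos _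
    have hZt : ZF t = Y t - Yh t := (hZeq t ht).symm
    have hGft : Gf t = -(Matrix.toEuclideanLin A (Y t - Yh t))
        + (g (X t) (Y t) - g (X a) (Yh t)) := by
      simp only [hGf, hG1, hG2, hXcdef, hYcdef, hYhcdef, Function.comp_apply, hclt, hcla,
        map_sub]
      abel
    have hinner : ⟪Gf t, ZF t⟫ ≤ -(lamA * ‖Y t - Yh t‖ ^ 2)
        + L * (‖X t - X a‖ + ‖Y t - Yh t‖) * ‖Y t - Yh t‖ := by
      rw [hZt, hGft, inner_add_left, inner_neg_left]
      have h1 := hA (Y t - Yh t)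
      have h2 := real_inner_le_norm (g (X t) (Y t) - g (X a) (Yh t)) (Y t - Yh t)
      have h3 := hg (X t) (X a) (Y t) (Yh t)
      have h4 : ⟪g (X t) (Y t) - g (X a) (Yh t), Y t - Yh t⟫
          ≤ (L * (‖X t - X a‖ + ‖Y t - Yh t‖)) * ‖Y t - Yh t‖ :=
        h2.trans (mul_le_mul_of_nonneg_right h3 (norm_nonneg _))
      linarith
    have expand : ⟪u' t, u t⟫ = Real.exp (c * (t - a)) ^ 2 * (ε⁻¹ * ⟪Gf t, ZF t⟫)
        + (c * Real.exp (c * (t - a)) ^ 2) * ⟪ZF t, ZF t⟫ := by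
      simp only [hu', hu, inner_add_left, real_inner_smul_left, real_inner_smul_right]
      ring
    have hZZ : ⟪ZF t, ZF t⟫ = ‖Y t - Yh t‖ ^ 2 := by
      rw [hZt]; exact real_inner_self_eq_norm_sq _
    have hunorm : ‖u t‖ = Real.exp (c * (t - a)) * ‖Y t - Yh t‖ := by
      simp only [hu]
      rw [norm_smul, Real.norm_eq_abs, abs_of_pos hepos, hZt]
    have hht : h t = (L / ε) * Real.exp (c * (t - a)) * ‖X t - X a‖ := by
      simp only [hh, hXcdef, Function.comp_apply, hclt, hcla]
    rw [expand, hZZ, hunorm, hht]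
    have step1 : Real.exp (c * (t - a)) ^ 2 * (ε⁻¹ * ⟪Gf t, ZF t⟫)
        ≤ Real.exp (c * (t - a)) ^ 2 * (ε⁻¹ * (-(lamA * ‖Y t - Yh t‖ ^ 2)
          + L * (‖X t - X a‖ + ‖Y t - Yh t‖) * ‖Y t - Yh t‖)) := by
      apply mul_le_mul_of_nonneg_left _ (by positivity)
      exact mul_le_mul_of_nonneg_left hinner (by positivity)
    have step2 : Real.exp (c * (t - a)) ^ 2 * (ε⁻¹ * (-(lamA * ‖Y t - Yh t‖ ^ 2)
          + L * (‖X t - X a‖ + ‖Y t - Yh t‖) * ‖Y t - Yh t‖))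
        + (c * Real.exp (c * (t - a)) ^ 2) * ‖Y t - Yh t‖ ^ 2
        = (L / ε) * Real.exp (c * (t - a)) * ‖X t - X a‖
          * (Real.exp (c * (t - a)) * ‖Y t - Yh t‖) := by
      rw [hc]; field_simp; ring
    linarith
  -- Gronwall via fencing lemma, with perturbation δ
  have main : ∀ δ > (0:ℝ), ∀ r ∈ Set.Icc a b, ‖u r‖ ≤ ‖u a‖ + δ + δ * (r - a) + H r := by
    intro δ hδ r hr
    set ρ : ℝ → ℝ := fun t => ‖u a‖ + δ + δ * (t - a) + H t with hρ
    have hρd : ∀ t, HasDerivAt ρ (δ + h t) t := fun t => by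
      have h1 : HasDerivAt (fun t : ℝ => δ * (t - a)) δ t := by
        simpa using ((hasDerivAt_id t).sub_const a).const_mul δ
      have h2 := (h1.add (hHd t)).const_add (‖u a‖ + δ)
      simpa [hρ, add_assoc] using h2
    have hρpos : ∀ t ∈ Set.Icc a b, 0 < ρ t := by
      intro t ht
      have hH0 : 0 ≤ H t := intervalIntegral.integral_nonneg ht.1 (fun v _ => hh0 v)
      have h1 : 0 ≤ δ * (t - a) := mul_nonneg hδ.le (by linarith [ht.1])
      have h2 := norm_nonneg (u a)
      simp only [hρ]; linarith
    set B : ℝ → ℝ := fun t => ρ t ^ 2 with hB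
    have hBd : ∀ t, HasDerivAt B (2 * ρ t * (δ + h t)) t := fun t => by
      have h1 := (hρd t).fun_pow 2
      simpa [hB, mul_comm, mul_assoc, mul_left_comm] using h1
    have hle : ∀ x ∈ Set.Icc a b, φ x ≤ B x := by
      apply image_le_of_deriv_right_lt_deriv_boundary
        (f := φ) (f' := fun t => 2 * ⟪u' t, u t⟫) (B := B) (B' := fun t => 2 * ρ t * (δ + h t))
      · exact (huc.inner huc).continuousOn
      · exact fun x _ => (hφd x).hasDerivWithinAt
      · have hHa : H a = 0 := by simp [hH]
        have : φ a = ‖u a‖ ^ 2 := real_inner_self_eq_norm_sq _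
        simp only [this, hB, hρ, hHa, sub_self, mul_zero, add_zero]
        nlinarith [norm_nonneg (u a), hδ]
      · exact hBd
      · intro x hx hfB
        have hx' : x ∈ Set.Icc a b := ⟨hx.1, hx.2.le⟩
        have hρx := hρpos x hx'
        have hnorm : ‖u x‖ = ρ x := by
          have h1 : ‖u x‖ ^ 2 = ρ x ^ 2 := by
            rw [← real_inner_self_eq_norm_sq]; exact hfB
          calc ‖u x‖ = Real.sqrt (‖u x‖ ^ 2) := (Real.sqrt_sq (norm_nonneg _)).symm
            _ = Real.sqrt (ρ x ^ 2) := by rw [h1]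
            _ = ρ x := Real.sqrt_sq hρx.le
        have h1 := hkey x hx'
        calc 2 * ⟪u' x, u x⟫ ≤ 2 * (h x * ‖u x‖) := by linarith
          _ = 2 * ρ x * h x := by rw [hnorm]; ring
          _ < 2 * ρ x * (δ + h x) := by nlinarith
    have hφr := hle r hr
    have h1 : ‖u r‖ ≤ ρ r := by
      calc ‖u r‖ = Real.sqrt (‖u r‖ ^ 2) := (Real.sqrt_sq (norm_nonneg _)).symm
        _ = Real.sqrt (φ r) := by rw [← real_inner_self_eq_norm_sq]
        _ ≤ Real.sqrt (B r) := Real.sqrt_le_sqrt hφr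
        _ = ρ r := Real.sqrt_sq (hρpos r hr).le
    simpa [hρ] using h1
  have main2 : ∀ r ∈ Set.Icc a b, ‖u r‖ ≤ ‖u a‖ + H r := by
    intro r hr
    apply le_of_forall_pos_le_add
    intro η hη
    have hra : 0 ≤ r - a := by linarith [hr.1]
    have hδpos : 0 < η / (1 + (r - a)) := by positivity
    have h1 := main (η / (1 + (r - a))) hδpos r hr
    have h2 : η / (1 + (r - a)) + η / (1 + (r - a)) * (r - a) = η := by
      have h3 : (1 + (r - a)) ≠ 0 := by positivity
      field_simp
    linarith
  -- conclude
  intro r hr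
  have hra : 0 ≤ r - a := by linarith [hr.1]
  have hZFr : Y r - Yh r = ZF r := hZeq r hr
  have hZFa : ZF a = Y a - Yh a := by simp [hZF]
  have hua : ‖u a‖ = ‖Y a - Yh a‖ := by
    simp [hu, hZFa]
  have hZFnorm : ‖ZF r‖ = Real.exp (-(c * (r - a))) * ‖u r‖ := by
    rw [hu]
    rw [norm_smul, Real.norm_eq_abs, abs_of_pos (Real.exp_pos _), ← mul_assoc,
      ← Real.exp_add, neg_add_cancel, Real.exp_zero, one_mul]
  have hHr : Real.exp (-(c * (r - a))) * H r
      = (L / ε) * ∫ v in a..r, Real.exp (-(lamA - L) * (r - v) / ε) * ‖X v - X a‖ := by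
    rw [hH, ← intervalIntegral.integral_const_mul, ← intervalIntegral.integral_const_mul]
    apply intervalIntegral.integral_congr
    intro v hv
    have hv' := hcl_eq v (hsub r hr hv)
    simp only [hh, hXcdef, Function.comp_apply, hv', hcla]
    have harg : -(lamA - L) * (r - v) / ε = -(c * (r - a)) + c * (v - a) := by
      rw [hc]; field_simp; ring
    rw [harg, Real.exp_add]
    ring
  calc ‖Y r - Yh r‖ = Real.exp (-(c * (r - a))) * ‖u r‖ := by rw [hZFr, hZFnorm]
    _ ≤ Real.exp (-(c * (r - a))) * (‖u a‖ + H r) := by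
        apply mul_le_mul_of_nonneg_left (main2 r hr) (Real.exp_pos _).le
    _ = Real.exp (-(c * (r - a))) * ‖Y a - Yh a‖ + Real.exp (-(c * (r - a))) * H r := by
        rw [hua]; ring
    _ = Real.exp (-(lamA - L) * (r - a) / ε) * ‖Y a - Yh a‖
        + (L / ε) * ∫ v in a..r, Real.exp (-(lamA - L) * (r - v) / ε) * ‖X v - X a‖ := by
        rw [hHr]
        congr 2
        rw [hc]; field_simp
  done
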